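/- Borel-Cantelli consequence: almost-sure gentle disintegration. Suppose the strictly increasing sequences Gamma, gamma satisfy: Gamma_1 >= 2 and Gamma_k < gamma_k/2 for all k >= 1; inf over k >= 1 of Gamma_{k+1}/theta_k >= 5; a_0 := sum over k >= 0 of 2^{-k} log( [2(Gamma_{k+1}+gamma_{k+1})+1]^2 ) < infinity; and for every a > 0, sum over k >= 1 of [2(theta_k+Gamma_k)+1]^2 e^{-a 2^{k-1}} < infinity. Let Q be a translation-invariant probability measure on Omega with p := ess sup_omega Q(omega_0 = 1 | sigma-algebra generated by (omega_j)_{j different from 0})(omega) < e^{-a_0/2}. Then there exists a measurable set Omegabar subset of Omega with Q(Omegabar) = 1 such that for every omega in Omegabar, the collection consisting of C_0(omega) := {{i} : omega_i = 0} together with the collections C_k(omega) of k-gentle atoms, k >= 1, is a gentle disintegration of L^(l) with respect to {i : omega_i = 0}, Gamma, gamma. -/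

import Mathlib

open MeasureTheory Real

/-! Multi-scale geometry of the bad region.

The rescaled lattice `L^(l) = (lℤ)²` is identified with `ℤ²` via the bijection
`i ↦ l·i`; under this identification the rescaled distance `d_l` on `L^(l)` becomes the
ℓ¹ distance on `ℤ²`.  Accordingly, sites of `L^(l)` are represented by points of `ℤ²`
and all distances below are measured in units of `l`. -/

/-- Sites of the (rescaled) lattice. -/
abbrev Site : Type := ℤ × ℤ

/-- The ℓ¹ distance on the (rescaled) lattice, i.e. `d_l` in units of `l`. -/
def dist1 (x y : Site) : ℕ := (x.1 - y.1).natAbs + (x.2 - y.2).natAbs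

/-- The space `Ω = {0,1}^{L^(l)}`; `true` encodes `1` (bad), `false` encodes `0` (good). -/
abbrev Omega : Type := Site → Bool

/-- The closed ball `B^(l)_r(x)` of (real) radius `r` around `x`. -/
def ball1 (r : ℝ) (x : Site) : Set Site := {j | (dist1 x j : ℝ) ≤ r}

/-- `θ_k := ∑_{h=1}^k (Γ_h + γ_h)`. -/
noncomputable def thetaSeq (Γ γ : ℕ → ℝ) (k : ℕ) : ℝ := ∑ h ∈ Finset.Icc 1 k, (Γ h + γ h)

/-- `g` is a `k`-gentle atom for the bad set `B`: `g = B^(l)_{Γ_k}(x) ∩ B` for some `x ∈ B`,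
`diam_l(g) ≤ Γ_k`, and `d_l(g, B \ g) > γ_k`. -/
def kAtom (Γ γ : ℕ → ℝ) (k : ℕ) (B : Set Site) (g : Set Site) : Prop :=
  (∃ x ∈ B, g = ball1 (Γ k) x ∩ B) ∧
    (∀ x ∈ g, ∀ y ∈ g, (dist1 x y : ℝ) ≤ Γ k) ∧
    ∀ x ∈ g, ∀ y ∈ B \ g, γ k < (dist1 x y : ℝ)

/-- The union of all `k`-gentle atoms of the bad set `B`. -/
def gentleStep (Γ γ : ℕ → ℝ) (k : ℕ) (B : Set Site) : Set Site :=
  {y | ∃ g : Set Site, kAtom Γ γ k B g ∧ y ∈ g}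

/-- The `k`-bad sites `BB_k(ω)`:  `BB_0(ω) = {i : ω_i = 1}` and
`BB_k(ω) = BB_{k-1}(ω) \ GG_k(ω)`. -/
def BB (Γ γ : ℕ → ℝ) (ω : Omega) : ℕ → Set Site
  | 0 => {i | ω i = true}
  | k + 1 => BB Γ γ ω k \ gentleStep Γ γ (k + 1) (BB Γ γ ω k)

/-- The `k`-gentle sites `GG_k(ω)`:  `GG_0(ω) = {i : ω_i = 0}` and, for `k ≥ 1`,
`GG_k(ω)` is the union of the `k`-gentle atoms of `BB_{k-1}(ω)`. -/
def GG (Γ γ : ℕ → ℝ) (ω : Omega) : ℕ → Set Site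
  | 0 => {i | ω i = false}
  | k + 1 => gentleStep Γ γ (k + 1) (BB Γ γ ω k)

/-- The σ-algebra generated by the coordinates `ω_j` with `j ≠ 0`. -/
def extSigma : MeasurableSpace Omega :=
  MeasurableSpace.comap (fun (ω : Omega) (j : {j : Site // j ≠ 0}) => ω j) inferInstance

/-- A version of the conditional probability `Q(ω_0 = 1 | σ(ω_j, j ≠ 0))`. -/
noncomputable def condBadProb (Q : Measure Omega) : Omega → ℝ :=
  Q[Set.indicator {ω : Omega | ω 0 = true} (fun _ => (1 : ℝ)) | extSigma]

/-- The strength of the disorder: `p = ess sup_ω Q(ω_0 = 1 | σ(ω_j, j ≠ 0))(ω)`. -/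
noncomputable def badParam (Q : Measure Omega) : ℝ := essSup (condBadProb Q) Q

/-- Invariance of `Q` under all lattice translations of `L^(l)`. -/
def TransInvariant (Q : Measure Omega) : Prop :=
  ∀ v : Site, Measure.map (fun (ω : Omega) (x : Site) => ω (x + v)) Q = Q

/-- `a₀ := ∑_{k≥0} 2^{-k} log([2(Γ_{k+1}+γ_{k+1})+1]²)`. -/
noncomputable def aZero (Γ γ : ℕ → ℝ) : ℝ :=
  ∑' k : ℕ, (2 : ℝ) ^ (-(k : ℤ)) * Real.log ((2 * (Γ (k + 1) + γ (k + 1)) + 1) ^ 2)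

/-- The coordinate envelope of `g`: the smallest coordinate rectangle containing `g`. -/
def env (g : Set Site) : Set Site :=
  {j | (∃ a ∈ g, a.1 ≤ j.1) ∧ (∃ a ∈ g, j.1 ≤ a.1) ∧ (∃ a ∈ g, a.2 ≤ j.2) ∧ (∃ a ∈ g, j.2 ≤ a.2)}

/-- `Y₀(g)` for a grade-`k` atom `g`: the set of sites within Chebyshev distance `θ_k`
of the envelope of `g` (coordinates measured in units of `l`). -/
def Yzero (Γ γ : ℕ → ℝ) (k : ℕ) (g : Set Site) : Set Site :=
  {j | ∃ i' ∈ env g, (max (i'.1 - j.1).natAbs (i'.2 - j.2).natAbs : ℝ) ≤ thetaSeq Γ γ k}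

/-- `GG_k` associated with a graded family `C`: the union of the elements of `C k`. -/
def GGofC (C : ℕ → Set (Set Site)) (k : ℕ) : Set Site := ⋃ g ∈ C k, g

/-- `BB_k` associated with a graded family `C`: `BB_0 = (GG_0)ᶜ`, `BB_k = BB_{k-1} \ GG_k`. -/
def BBofC (C : ℕ → Set (Set Site)) : ℕ → Set Site
  | 0 => (GGofC C 0)ᶜ
  | k + 1 => BBofC C k \ GGofC C (k + 1)

/-- A gentle disintegration of `L^(l)` with respect to `G₀`, `Γ`, `γ`: a sequence
`(C_k)_{k≥0}` of collections of finite subsets of `L^(l)` such that the union of the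
`C_k` is a partition of `L^(l)` (with uniquely determined grades); `C_0 = {{i} : i ∈ G₀}`;
every `g ∈ C_k`, `k ≥ 1`, has `diam_l(g) ≤ Γ_k` and `d_l(g, BB_{k-1} \ g) > γ_k`; and
for every site `i` the grades `k ≥ 1` of atoms `g ∈ C_k` with `Y₀(g) ∋ i` are bounded. -/
def IsGentleDisintegration (Γ γ : ℕ → ℝ) (G0 : Set Site) (C : ℕ → Set (Set Site)) : Prop :=
  (∀ k : ℕ, ∀ g ∈ C k, g.Finite) ∧
    (∀ k : ℕ, ∀ g ∈ C k, g.Nonempty) ∧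
    (∀ k k' : ℕ, ∀ g : Set Site, g ∈ C k → g ∈ C k' → k = k') ∧
    (∀ k k' : ℕ, ∀ g g' : Set Site, g ∈ C k → g' ∈ C k' → g ≠ g' → Disjoint g g') ∧
    (⋃ k : ℕ, GGofC C k) = Set.univ ∧
    C 0 = {s | ∃ i ∈ G0, s = {i}} ∧
    (∀ k : ℕ, ∀ g ∈ C (k + 1), ∀ x ∈ g, ∀ y ∈ g, (dist1 x y : ℝ) ≤ Γ (k + 1)) ∧
    (∀ k : ℕ, ∀ g ∈ C (k + 1), ∀ x ∈ g, ∀ y ∈ BBofC C k \ g, γ (k + 1) < (dist1 x y : ℝ)) ∧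
    ∀ i : Site, ∃ K : ℕ, ∀ k : ℕ, ∀ g ∈ C (k + 1), i ∈ Yzero Γ γ (k + 1) g → k + 1 ≤ K

/-- The graded family constructed from the disorder `ω`: `C_0(ω)` consists of the
singletons of the `0`-gentle sites, and `C_k(ω)`, `k ≥ 1`, of the `k`-gentle atoms. -/
def Catoms (Γ γ : ℕ → ℝ) (ω : Omega) : ℕ → Set (Set Site)
  | 0 => {s | ∃ i : Site, ω i = false ∧ s = {i}}
  | k + 1 => {g | kAtom Γ γ (k + 1) (BB Γ γ ω k) g}
/-! ### Basic distance lemmas -/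

lemma dist1_self (x : Site) : dist1 x x = 0 := by simp [dist1]

lemma dist1_comm (x y : Site) : dist1 x y = dist1 y x := by
  simp [dist1, ← Int.natAbs_neg (x.1 - y.1), ← Int.natAbs_neg (x.2 - y.2), neg_sub]

lemma dist1_triangle (x y z : Site) : dist1 x z ≤ dist1 x y + dist1 y z := by
  have h1 : (x.1 - z.1).natAbs ≤ (x.1 - y.1).natAbs + (y.1 - z.1).natAbs := by
    have : x.1 - z.1 = (x.1 - y.1) + (y.1 - z.1) := by ring
    rw [this]; exact Int.natAbs_add_le _ _
  have h2 : (x.2 - z.2).natAbs ≤ (x.2 - y.2).natAbs + (y.2 - z.2).natAbs := by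
    have : x.2 - z.2 = (x.2 - y.2) + (y.2 - z.2) := by ring
    rw [this]; exact Int.natAbs_add_le _ _
  simp only [dist1]; omega

lemma dist1_triangle' (x y z : Site) :
    (dist1 x z : ℝ) ≤ (dist1 x y : ℝ) + (dist1 y z : ℝ) := by
  exact_mod_cast Nat.cast_le.mpr (dist1_triangle x y z) |>.trans_eq (by push_cast; ring)

/-! ### thetaSeq lemmas -/

section theta
variable {Γ γ : ℕ → ℝ}

lemma thetaSeq_zero : thetaSeq Γ γ 0 = 0 := by simp [thetaSeq]

lemma thetaSeq_succ (k : ℕ) :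
    thetaSeq Γ γ (k + 1) = thetaSeq Γ γ k + (Γ (k + 1) + γ (k + 1)) := by
  rw [thetaSeq, thetaSeq, Finset.sum_Icc_succ_top (by omega)]

lemma thetaSeq_nonneg (hΓ : ∀ k, 1 ≤ k → 0 < Γ k) (hγ : ∀ k, 1 ≤ k → 0 < γ k) (k : ℕ) :
    0 ≤ thetaSeq Γ γ k := by
  apply Finset.sum_nonneg
  intro h hh
  rw [Finset.mem_Icc] at hh
  exact add_nonneg (hΓ h hh.1).le (hγ h hh.1).le

lemma thetaSeq_pos (hΓ : ∀ k, 1 ≤ k → 0 < Γ k) (hγ : ∀ k, 1 ≤ k → 0 < γ k)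
    {k : ℕ} (hk : 1 ≤ k) : 0 < thetaSeq Γ γ k := by
  have : thetaSeq Γ γ k = thetaSeq Γ γ (k - 1) + (Γ k + γ k) := by
    obtain ⟨m, rfl⟩ := Nat.exists_eq_add_of_le' hk
    simpa using thetaSeq_succ (Γ := Γ) (γ := γ) m
  rw [this]
  exact add_pos_of_nonneg_of_pos (thetaSeq_nonneg hΓ hγ _) (add_pos (hΓ k hk) (hγ k hk))

end theta
/-! ### Boxes -/

/-- The Chebyshev box of radius `⌊R⌋` around `i`, as a finset. -/
noncomputable def boxF (R : ℝ) (i : Site) : Finset Site :=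
  Finset.Icc (i.1 - ⌊R⌋, i.2 - ⌊R⌋) (i.1 + ⌊R⌋, i.2 + ⌊R⌋)

lemma mem_boxF_of_cheb {R : ℝ} {i j : Site}
    (h1 : ((i.1 - j.1).natAbs : ℝ) ≤ R) (h2 : ((i.2 - j.2).natAbs : ℝ) ≤ R) :
    j ∈ boxF R i := by
  have k1 : |i.1 - j.1| ≤ ⌊R⌋ := by
    rw [Int.le_floor]
    have e : ((|i.1 - j.1| : ℤ) : ℝ) = ((i.1 - j.1).natAbs : ℝ) := by
      push_cast [Nat.cast_natAbs]; simp
    rw [e]; exact h1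
  have k2 : |i.2 - j.2| ≤ ⌊R⌋ := by
    rw [Int.le_floor]
    have e : ((|i.2 - j.2| : ℤ) : ℝ) = ((i.2 - j.2).natAbs : ℝ) := by
      push_cast [Nat.cast_natAbs]; simp
    rw [e]; exact h2
  rw [abs_le] at k1 k2
  simp only [boxF, Finset.mem_Icc, Prod.le_def]
  constructor <;> constructor <;> omega

lemma mem_boxF_of_dist1 {R : ℝ} {i j : Site} (h : (dist1 i j : ℝ) ≤ R) : j ∈ boxF R i := by
  have h1 : ((i.1 - j.1).natAbs : ℝ) ≤ R := by
    refine le_trans ?_ h; exact_mod_cast Nat.cast_le.mpr (Nat.le_add_right _ _ : (i.1-j.1).natAbs ≤ dist1 i j)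
  have h2 : ((i.2 - j.2).natAbs : ℝ) ≤ R := by
    refine le_trans ?_ h; exact_mod_cast Nat.cast_le.mpr (Nat.le_add_left _ _ : (i.2-j.2).natAbs ≤ dist1 i j)
  exact mem_boxF_of_cheb h1 h2

lemma card_boxF_le {R : ℝ} (hR : 0 ≤ R) (i : Site) :
    ((boxF R i).card : ℝ) ≤ (2 * R + 1) ^ 2 := by
  have hfl : (0:ℤ) ≤ ⌊R⌋ := Int.floor_nonneg.mpr hR
  have hc : (boxF R i).card = ((2 * ⌊R⌋ + 1).toNat) * ((2 * ⌊R⌋ + 1).toNat) := by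
    rw [boxF, Finset.Icc_prod_def, Finset.card_product]
    simp only [Int.card_Icc]
    congr 1 <;> congr 1 <;> omega
  rw [hc]
  push_cast
  have h1 : ((2 * ⌊R⌋ + 1).toNat : ℝ) ≤ 2 * R + 1 := by
    have e : (((2 * ⌊R⌋ + 1).toNat : ℤ) : ℝ) = ((2 * ⌊R⌋ + 1 : ℤ) : ℝ) := by
      congr 1; omega
    push_cast at e ⊢
    rw [e]
    have := Int.floor_le R
    push_cast
    linarith
  have h0 : (0:ℝ) ≤ ((2 * ⌊R⌋ + 1).toNat : ℝ) := by positivity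
  calc ((2 * ⌊R⌋ + 1).toNat : ℝ) * ((2 * ⌊R⌋ + 1).toNat : ℝ) ≤ (2*R+1)*(2*R+1) :=
        mul_le_mul h1 h1 h0 (by linarith)
    _ = (2*R+1)^2 := by ring

lemma boxF_finite_subset {R : ℝ} {i : Site} {s : Set Site}
    (h : ∀ j ∈ s, (dist1 i j : ℝ) ≤ R) : s.Finite := by
  exact Set.Finite.subset (boxF R i).finite_toSet (fun j hj => mem_boxF_of_dist1 (h j hj))
/-! ### Atom lemmas -/

section atoms
variable {Γ γ : ℕ → ℝ} {k : ℕ} {B g g' : Set Site}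

lemma kAtom.subset (h : kAtom Γ γ k B g) : g ⊆ B := by
  obtain ⟨⟨x, hx, rfl⟩, -, -⟩ := h
  exact Set.inter_subset_right

lemma kAtom.nonempty (hΓ : 0 ≤ Γ k) (h : kAtom Γ γ k B g) : g.Nonempty := by
  obtain ⟨⟨x, hx, rfl⟩, -, -⟩ := h
  exact ⟨x, by simpa [ball1, dist1_self] using hΓ, hx⟩

lemma kAtom.finite (h : kAtom Γ γ k B g) : g.Finite := by
  obtain ⟨⟨x, hx, rfl⟩, -, -⟩ := h
  exact boxF_finite_subset (i := x) (R := Γ k) (fun j hj => hj.1)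

lemma kAtom.disjoint (hΓγ : Γ k < γ k) (h : kAtom Γ γ k B g) (h' : kAtom Γ γ k B g')
    (hne : g ≠ g') : Disjoint g g' := by
  rw [Set.disjoint_left]
  intro z hz hz'
  -- some point is in one and not the other
  have key : ∀ {a b : Set Site}, kAtom Γ γ k B a → kAtom Γ γ k B b → z ∈ a → z ∈ b →
      ∀ y ∈ a, y ∈ b := by
    intro a b ha hb hza hzb y hy
    by_contra hyb
    have h1 : (dist1 y z : ℝ) ≤ Γ k := ha.2.1 y hy z hza
    have h2 : γ k < (dist1 y z : ℝ) := by
      have := hb.2.2 z hzb y ⟨ha.subset hy, hyb⟩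
      rwa [dist1_comm] at this
    linarith
  exact hne (Set.Subset.antisymm (fun y hy => key h h' hz hz' y hy)
    (fun y hy => key h' h hz' hz y hy))

/-- Growth lemma: a `k`-bad point has a `k-1`-bad companion at controlled distance. -/
lemma bad_companion (hΓ : 0 < Γ k) (hγ : 0 < γ k)
    {i : Site} (hi : i ∈ B) (hni : i ∉ gentleStep Γ γ k B) :
    ∃ j ∈ B, (Γ k) / 2 < (dist1 i j : ℝ) ∧ (dist1 i j : ℝ) ≤ Γ k + γ k := by
  set g : Set Site := ball1 (Γ k) i ∩ B with hg
  have hig : i ∈ g := ⟨by simpa [ball1, dist1_self] using hΓ.le, hi⟩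
  have hnotatom : ¬ ((∀ x ∈ g, ∀ y ∈ g, (dist1 x y : ℝ) ≤ Γ k) ∧
      ∀ x ∈ g, ∀ y ∈ B \ g, γ k < (dist1 x y : ℝ)) := by
    intro ⟨hd, hs⟩
    exact hni ⟨g, ⟨⟨i, hi, rfl⟩, hd, hs⟩, hig⟩
  rw [not_and_or] at hnotatom
  rcases hnotatom with hd | hs
  · push_neg at hd
    obtain ⟨y, hy, z, hz, hdist⟩ := hd
    have hyb : (dist1 i y : ℝ) ≤ Γ k := hy.1
    have hzb : (dist1 i z : ℝ) ≤ Γ k := hz.1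
    have htri : (dist1 y z : ℝ) ≤ (dist1 i y : ℝ) + (dist1 i z : ℝ) := by
      rw [dist1_comm i y]; exact dist1_triangle' y i z
    rcases le_total (dist1 i y : ℝ) (dist1 i z : ℝ) with hc | hc
    · exact ⟨z, hz.2, by linarith, by linarith⟩
    · exact ⟨y, hy.2, by linarith, by linarith⟩
  · push_neg at hs
    obtain ⟨y, hy, z, hz, hdist⟩ := hs
    have hzB : z ∈ B := hz.1
    have hznb : ¬ ((dist1 i z : ℝ) ≤ Γ k) := fun hc => hz.2 ⟨hc, hzB⟩
    push_neg at hznb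
    have hyb : (dist1 i y : ℝ) ≤ Γ k := hy.1
    have : (dist1 i z : ℝ) ≤ (dist1 i y : ℝ) + (dist1 y z : ℝ) := dist1_triangle' i y z
    exact ⟨z, hzB, by linarith, by linarith⟩

end atoms

/-! ### Structure of `BB`, `GG`, `Catoms` -/

section bbstruct
variable {Γ γ : ℕ → ℝ} {ω : Omega}

lemma BB_succ_subset (k : ℕ) : BB Γ γ ω (k + 1) ⊆ BB Γ γ ω k := fun _ h => h.1

lemma BB_antitone {m n : ℕ} (h : n ≤ m) : BB Γ γ ω m ⊆ BB Γ γ ω n := by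
  induction m with
  | zero => simp_all
  | succ m ih =>
      rcases Nat.eq_or_lt_of_le h with rfl | h'
      · exact fun _ h => h
      · exact fun x hx => ih (by omega) (BB_succ_subset m hx)

lemma GGofC_Catoms_zero : GGofC (Catoms Γ γ ω) 0 = {i | ω i = false} := by
  ext j
  simp only [GGofC, Catoms, Set.mem_iUnion, Set.mem_setOf_eq]
  constructor
  · rintro ⟨s, ⟨i, hi, rfl⟩, hj⟩
    simp only [Set.mem_singleton_iff] at hj
    subst hj; exact hi
  · intro hj; exact ⟨{j}, ⟨j, hj, rfl⟩, rfl⟩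

lemma GGofC_Catoms_succ (k : ℕ) :
    GGofC (Catoms Γ γ ω) (k + 1) = gentleStep Γ γ (k + 1) (BB Γ γ ω k) := by
  ext j
  simp only [GGofC, Catoms, Set.mem_iUnion, Set.mem_setOf_eq, gentleStep]
  constructor
  · rintro ⟨g, hg, hj⟩; exact ⟨g, hg, hj⟩
  · rintro ⟨g, hg, hj⟩; exact ⟨g, hg, hj⟩

lemma BBofC_Catoms (k : ℕ) : BBofC (Catoms Γ γ ω) k = BB Γ γ ω k := by
  induction k with
  | zero =>
      show (GGofC (Catoms Γ γ ω) 0)ᶜ = _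
      rw [GGofC_Catoms_zero]
      ext i; simp [BB]
  | succ k ih =>
      show BBofC (Catoms Γ γ ω) k \ GGofC (Catoms Γ γ ω) (k+1) = _
      rw [ih, GGofC_Catoms_succ]
      rfl

lemma mem_BB_of_not_gentle {i : Site} (hi : i ∈ BB Γ γ ω 0)
    (h : ∀ k, i ∉ GGofC (Catoms Γ γ ω) (k + 1)) (k : ℕ) : i ∈ BB Γ γ ω k := by
  induction k with
  | zero => exact hi
  | succ k ih =>
      refine ⟨ih, ?_⟩
      have := h k
      rwa [GGofC_Catoms_succ] at this

end bbstruct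
/-! ### The witness tree -/

open Classical in
/-- The annulus of candidate companions at scale `k`. -/
noncomputable def annF (Γ γ : ℕ → ℝ) (k : ℕ) (i : Site) : Finset Site :=
  (boxF (Γ k + γ k) i).filter
    (fun j => (Γ k) / 2 < (dist1 i j : ℝ) ∧ (dist1 i j : ℝ) ≤ Γ k + γ k)

lemma mem_annF {Γ γ : ℕ → ℝ} {k : ℕ} {i j : Site} :
    j ∈ annF Γ γ k i ↔ (Γ k) / 2 < (dist1 i j : ℝ) ∧ (dist1 i j : ℝ) ≤ Γ k + γ k := by
  classical
  simp only [annF, Finset.mem_filter]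
  constructor
  · rintro ⟨-, h⟩; exact h
  · intro h; exact ⟨mem_boxF_of_dist1 h.2, h⟩

/-- The tree of potential witness sets. -/
noncomputable def treeF (Γ γ : ℕ → ℝ) : ℕ → Site → Finset (Finset Site)
  | 0, i => {{i}}
  | (k+1), i => (annF Γ γ (k+1) i).biUnion
      (fun j => ((treeF Γ γ k i) ×ˢ (treeF Γ γ k j)).image fun p => p.1 ∪ p.2)

section tree
variable {Γ γ : ℕ → ℝ}
variable (hΓpos : ∀ k, 1 ≤ k → 0 < Γ k) (hγpos : ∀ k, 1 ≤ k → 0 < γ k)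

include hΓpos hγpos in
lemma tree_dist {k : ℕ} {i : Site} {S : Finset Site} (hS : S ∈ treeF Γ γ k i)
    {x : Site} (hx : x ∈ S) : (dist1 i x : ℝ) ≤ thetaSeq Γ γ k := by
  induction k generalizing i S with
  | zero =>
      simp only [treeF, Finset.mem_singleton] at hS
      subst hS
      simp only [Finset.mem_singleton] at hx
      subst hx
      simp [dist1_self, thetaSeq_zero]
  | succ k ih =>
      simp only [treeF, Finset.mem_biUnion, Finset.mem_image, Finset.mem_product] at hS
      obtain ⟨j, hj, ⟨s, t⟩, ⟨hs, ht⟩, rfl⟩ := hS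
      rw [Finset.mem_union] at hx
      rw [thetaSeq_succ]
      rcases hx with hx | hx
      · have := ih hs hx
        have h0 : 0 < Γ (k+1) + γ (k+1) :=
          add_pos (hΓpos _ (by omega)) (hγpos _ (by omega))
        linarith
      · have h1 := ih ht hx
        have h2 : (dist1 i j : ℝ) ≤ Γ (k+1) + γ (k+1) := (mem_annF.mp hj).2
        have := dist1_triangle' i j x
        linarith

variable (hsteep : ∀ k, 1 ≤ k → 5 ≤ Γ (k + 1) / thetaSeq Γ γ k)

include hΓpos hγpos hsteep in
lemma tree_card {k : ℕ} {i : Site} {S : Finset Site} (hS : S ∈ treeF Γ γ k i) :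
    S.card = 2 ^ k := by
  induction k generalizing i S with
  | zero => simp only [treeF, Finset.mem_singleton] at hS; subst hS; simp
  | succ k ih =>
      simp only [treeF, Finset.mem_biUnion, Finset.mem_image, Finset.mem_product] at hS
      obtain ⟨j, hj, ⟨s, t⟩, ⟨hs, ht⟩, rfl⟩ := hS
      have hsep : 2 * thetaSeq Γ γ k ≤ Γ (k+1) / 2 := by
        rcases Nat.eq_zero_or_pos k with rfl | hk
        · rw [thetaSeq_zero]
          have := hΓpos 1 le_rfl
          simp only [zero_add] at *
          linarith
        · have hθ := thetaSeq_pos hΓpos hγpos hk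
          have h5 := hsteep k hk
          rw [le_div_iff₀ hθ] at h5
          linarith
      have hdisj : Disjoint s t := by
        rw [Finset.disjoint_left]
        intro x hxs hxt
        have h1 := tree_dist hΓpos hγpos hs hxs
        have h2 := tree_dist hΓpos hγpos ht hxt
        have h3 : (Γ (k+1)) / 2 < (dist1 i j : ℝ) := (mem_annF.mp hj).1
        have h4 : (dist1 i j : ℝ) ≤ (dist1 i x : ℝ) + (dist1 x j : ℝ) := dist1_triangle' i x j
        rw [dist1_comm x j] at h4
        linarith
      rw [Finset.card_union_of_disjoint hdisj, ih hs, ih ht]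
      ring

end tree

/-- Witness extraction: a `k`-bad site carries a tree of `2^k` bad sites. -/
lemma tree_witness {Γ γ : ℕ → ℝ} (hΓpos : ∀ k, 1 ≤ k → 0 < Γ k)
    (hγpos : ∀ k, 1 ≤ k → 0 < γ k) {ω : Omega} {k : ℕ} {i : Site}
    (hi : i ∈ BB Γ γ ω k) :
    ∃ S ∈ treeF Γ γ k i, ∀ x ∈ S, ω x = true := by
  induction k generalizing i with
  | zero => exact ⟨{i}, by simp [treeF], by simpa [BB] using hi⟩
  | succ k ih =>
      obtain ⟨hik, hing⟩ := hi
      obtain ⟨j, hjB, hj1, hj2⟩ :=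
        bad_companion (hΓpos (k+1) (by omega)) (hγpos (k+1) (by omega)) hik hing
      obtain ⟨s, hs, hstrue⟩ := ih hik
      obtain ⟨t, ht, httrue⟩ := ih hjB
      refine ⟨s ∪ t, ?_, ?_⟩
      · simp only [treeF, Finset.mem_biUnion, Finset.mem_image, Finset.mem_product]
        exact ⟨j, mem_annF.mpr ⟨hj1, hj2⟩, ⟨s, t⟩, ⟨hs, ht⟩, rfl⟩
      · intro x hx
        rcases Finset.mem_union.mp hx with hx | hx
        · exact hstrue x hx
        · exact httrue x hx
/-! ### Counting the tree -/

/-- `M_h = (2(Γ_h+γ_h)+1)²`. -/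
noncomputable def Msq (Γ γ : ℕ → ℝ) (h : ℕ) : ℝ := (2 * (Γ h + γ h) + 1) ^ 2

/-- `N_k = ∏_{h=1}^k M_h^{2^{k-h}}`. -/
noncomputable def NNk (Γ γ : ℕ → ℝ) (k : ℕ) : ℝ :=
  ∏ h ∈ Finset.Icc 1 k, (Msq Γ γ h) ^ (2 ^ (k - h))

lemma NNk_nonneg (Γ γ : ℕ → ℝ) (k : ℕ) : 0 ≤ NNk Γ γ k :=
  Finset.prod_nonneg fun h _ => pow_nonneg (sq_nonneg _) _

section count
variable {Γ γ : ℕ → ℝ}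
variable (hΓpos : ∀ k, 1 ≤ k → 0 < Γ k) (hγpos : ∀ k, 1 ≤ k → 0 < γ k)

include hΓpos hγpos in
lemma tree_count (k : ℕ) (i : Site) : ((treeF Γ γ k i).card : ℝ) ≤ NNk Γ γ k := by
  induction k generalizing i with
  | zero => simp [treeF, NNk]
  | succ k ih =>
      have hM : ((annF Γ γ (k+1) i).card : ℝ) ≤ Msq Γ γ (k+1) := by
        have hsub : annF Γ γ (k+1) i ⊆ boxF (Γ (k+1) + γ (k+1)) i := by
          intro j hj
          exact mem_boxF_of_dist1 (mem_annF.mp hj).2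
        have h0 : (0:ℝ) ≤ Γ (k+1) + γ (k+1) :=
          (add_pos (hΓpos _ (by omega)) (hγpos _ (by omega))).le
        calc ((annF Γ γ (k+1) i).card : ℝ) ≤ ((boxF (Γ (k+1) + γ (k+1)) i).card : ℝ) := by
              exact_mod_cast Finset.card_le_card hsub
          _ ≤ (2 * (Γ (k+1) + γ (k+1)) + 1) ^ 2 := card_boxF_le h0 i
          _ = Msq Γ γ (k+1) := rfl
      have hcard : ((treeF Γ γ (k+1) i).card : ℝ) ≤
          ∑ j ∈ annF Γ γ (k+1) i, ((treeF Γ γ k i).card : ℝ) * ((treeF Γ γ k j).card : ℝ) := by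
        have h1 : (treeF Γ γ (k+1) i).card ≤
            ∑ j ∈ annF Γ γ (k+1) i, ((treeF Γ γ k i).card * (treeF Γ γ k j).card) := by
          refine le_trans (Finset.card_biUnion_le) (Finset.sum_le_sum fun j _ => ?_)
          refine le_trans (Finset.card_image_le) ?_
          rw [Finset.card_product]
        calc ((treeF Γ γ (k+1) i).card : ℝ)
            ≤ ((∑ j ∈ annF Γ γ (k+1) i, ((treeF Γ γ k i).card * (treeF Γ γ k j).card) : ℕ) : ℝ) := by
              exact_mod_cast h1
          _ = _ := by push_cast; ring
      have hsum : ∑ j ∈ annF Γ γ (k+1) i, ((treeF Γ γ k i).card : ℝ) * ((treeF Γ γ k j).card : ℝ)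
          ≤ ((annF Γ γ (k+1) i).card : ℝ) * (NNk Γ γ k * NNk Γ γ k) := by
        calc ∑ j ∈ annF Γ γ (k+1) i, ((treeF Γ γ k i).card : ℝ) * ((treeF Γ γ k j).card : ℝ)
            ≤ ∑ _j ∈ annF Γ γ (k+1) i, NNk Γ γ k * NNk Γ γ k :=
              Finset.sum_le_sum fun j _ =>
                mul_le_mul (ih i) (ih j) (by positivity) (NNk_nonneg Γ γ k)
          _ = ((annF Γ γ (k+1) i).card : ℝ) * (NNk Γ γ k * NNk Γ γ k) := by
              rw [Finset.sum_const, nsmul_eq_mul]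
      have hNN : NNk Γ γ (k+1) = Msq Γ γ (k+1) * (NNk Γ γ k * NNk Γ γ k) := by
        rw [NNk, Finset.prod_Icc_succ_top (by omega)]
        have : ∀ h ∈ Finset.Icc 1 k, (Msq Γ γ h) ^ (2 ^ (k + 1 - h)) =
            ((Msq Γ γ h) ^ (2 ^ (k - h))) * ((Msq Γ γ h) ^ (2 ^ (k - h))) := by
          intro h hh
          rw [Finset.mem_Icc] at hh
          rw [← pow_add]
          congr 1
          have : k + 1 - h = (k - h) + 1 := by omega
          rw [this]; ring
        rw [Finset.prod_congr rfl this, Finset.prod_mul_distrib]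
        simp only [Nat.sub_self, pow_zero, pow_one]
        rw [NNk]; ring
      calc ((treeF Γ γ (k+1) i).card : ℝ)
          ≤ ((annF Γ γ (k+1) i).card : ℝ) * (NNk Γ γ k * NNk Γ γ k) := le_trans hcard hsum
        _ ≤ Msq Γ γ (k+1) * (NNk Γ γ k * NNk Γ γ k) := by
            have : (0:ℝ) ≤ NNk Γ γ k * NNk Γ γ k :=
              mul_nonneg (NNk_nonneg Γ γ k) (NNk_nonneg Γ γ k)
            exact mul_le_mul_of_nonneg_right hM this
        _ = NNk Γ γ (k+1) := hNN.symm

include hΓpos hγpos in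
lemma NNk_le_exp (ha0 : Summable fun k : ℕ =>
      (2 : ℝ) ^ (-(k : ℤ)) * Real.log ((2 * (Γ (k + 1) + γ (k + 1)) + 1) ^ 2)) (k : ℕ) :
    NNk Γ γ k ≤ Real.exp ((2 ^ k : ℝ) * (aZero Γ γ / 2)) := by
  have hM1 : ∀ h, 1 ≤ h → 1 ≤ Msq Γ γ h := by
    intro h hh
    have := add_pos (hΓpos h hh) (hγpos h hh)
    have h1 : (1:ℝ) ≤ 2 * (Γ h + γ h) + 1 := by linarith
    calc (1:ℝ) = 1^2 := by ring
      _ ≤ (2 * (Γ h + γ h) + 1)^2 := by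
          apply pow_le_pow_left₀ (by norm_num) h1
  -- rewrite NNk as an exponential
  have hrw : NNk Γ γ k = Real.exp (∑ h ∈ Finset.Icc 1 k,
      ((2:ℝ) ^ (k - h) * Real.log (Msq Γ γ h))) := by
    rw [Real.exp_sum, NNk]
    refine Finset.prod_congr rfl fun h hh => ?_
    rw [Finset.mem_Icc] at hh
    have hMpos : 0 < Msq Γ γ h := lt_of_lt_of_le one_pos (hM1 h hh.1)
    have : Real.exp ((2:ℝ) ^ (k - h) * Real.log (Msq Γ γ h)) =
        Real.exp (((2 ^ (k - h) : ℕ) : ℝ) * Real.log (Msq Γ γ h)) := by push_cast; ring_nf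
    rw [this, Real.exp_nat_mul, Real.exp_log hMpos]
  rw [hrw, Real.exp_le_exp]
  -- bound the sum of logs
  have hterm : ∀ h ∈ Finset.Icc 1 k, (2:ℝ) ^ (k - h) * Real.log (Msq Γ γ h)
      ≤ (2:ℝ)^k * ((2:ℝ) ^ (-(h:ℤ)) * Real.log (Msq Γ γ h)) := by
    intro h hh
    rw [Finset.mem_Icc] at hh
    have hlog : 0 ≤ Real.log (Msq Γ γ h) := Real.log_nonneg (hM1 h hh.1)
    have hpow : ((2:ℝ) ^ (k - h)) = (2:ℝ)^k * (2:ℝ) ^ (-(h:ℤ)) := by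
      rw [zpow_neg, zpow_natCast, mul_comm, inv_mul_eq_div, eq_div_iff (by positivity : ((2:ℝ)^h) ≠ 0), ← pow_add]
      congr 1; omega
    rw [hpow, mul_assoc]
  refine le_trans (Finset.sum_le_sum hterm) ?_
  rw [← Finset.mul_sum]
  have hsum : ∑ h ∈ Finset.Icc 1 k, (2:ℝ) ^ (-(h:ℤ)) * Real.log (Msq Γ γ h) ≤ aZero Γ γ / 2 := by
    have hre : ∑ h ∈ Finset.Icc 1 k, (2:ℝ) ^ (-(h:ℤ)) * Real.log (Msq Γ γ h)
        = ∑ j ∈ Finset.range k, (1/2) * ((2:ℝ) ^ (-(j:ℤ)) * Real.log (Msq Γ γ (j+1))) := by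
      rw [← Finset.Ico_add_one_right_eq_Icc, Finset.sum_Ico_eq_sum_range]
      refine Finset.sum_congr (by congr 1) fun j _ => ?_
      have : (2:ℝ) ^ (-((1+j : ℕ):ℤ)) = (1/2) * (2:ℝ) ^ (-(j:ℤ)) := by
        push_cast
        rw [neg_add, zpow_add₀ (by norm_num : (2:ℝ) ≠ 0)]
        norm_num
      rw [this, Nat.add_comm 1 j]
      ring
    rw [hre, ← Finset.mul_sum]
    have hsle : ∑ j ∈ Finset.range k, (2:ℝ) ^ (-(j:ℤ)) * Real.log (Msq Γ γ (j+1))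
        ≤ aZero Γ γ := by
      have : aZero Γ γ = ∑' j : ℕ, (2:ℝ) ^ (-(j:ℤ)) * Real.log (Msq Γ γ (j+1)) := rfl
      rw [this]
      refine Summable.sum_le_tsum _ (fun j _ => ?_) ?_
      · exact mul_nonneg (by positivity) (Real.log_nonneg (hM1 (j+1) (by omega)))
      · exact ha0
    linarith
  calc (2:ℝ)^k * ∑ h ∈ Finset.Icc 1 k, (2:ℝ) ^ (-(h:ℤ)) * Real.log (Msq Γ γ h)
      ≤ (2:ℝ)^k * (aZero Γ γ / 2) := by
        exact mul_le_mul_of_nonneg_left hsum (by positivity)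
    _ = _ := by ring

end count
/-! ### Probability estimates -/

/-- The event that all sites of `S` are bad. -/
def Ev (S : Finset Site) : Set Omega := {ω | ∀ j ∈ S, ω j = true}

lemma Ev_empty : Ev (∅ : Finset Site) = Set.univ := by ext ω; simp [Ev]

lemma Ev_insert (i : Site) (S : Finset Site) :
    Ev (insert i S) = Ev S ∩ {ω : Omega | ω i = true} := by
  ext ω; simp only [Ev, Set.mem_inter_iff, Set.mem_setOf_eq, Finset.mem_insert]
  constructor
  · intro h; exact ⟨fun j hj => h j (Or.inr hj), h i (Or.inl rfl)⟩
  · rintro ⟨h1, h2⟩ j (rfl | hj); exacts [h2, h1 j hj]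

lemma measSet_coord (i : Site) : MeasurableSet {ω : Omega | ω i = true} := by
  have h : {ω : Omega | ω i = true} = (fun ω : Omega => ω i) ⁻¹' {true} := rfl
  rw [h]
  exact measurable_pi_apply i (measurableSet_singleton true)

lemma Ev_measurable (S : Finset Site) : MeasurableSet (Ev S) := by
  have : Ev S = ⋂ j ∈ (S : Set Site), {ω : Omega | ω j = true} := by
    ext ω; simp [Ev]
  rw [this]
  exact MeasurableSet.biInter S.countable_toSet fun j _ => measSet_coord j

lemma extSigma_le : extSigma ≤ (inferInstance : MeasurableSpace Omega) :=
  measurable_iff_comap_le.mp (measurable_pi_lambda _ fun j => measurable_pi_apply (j : Site))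

lemma extSigma_coord {m : Site} (hm : m ≠ 0) :
    MeasurableSet[extSigma] {ω : Omega | ω m = true} := by
  refine ⟨(fun f : {j : Site // j ≠ 0} → Bool => f ⟨m, hm⟩) ⁻¹' {true}, ?_, rfl⟩
  exact (measurable_pi_apply _) (measurableSet_singleton true)

lemma Ev_extSigma {S : Finset Site} (h0 : (0 : Site) ∉ S) :
    MeasurableSet[extSigma] (Ev S) := by
  have : Ev S = ⋂ j ∈ (S : Set Site), {ω : Omega | ω j = true} := by
    ext ω; simp [Ev]
  rw [this]
  exact MeasurableSet.biInter S.countable_toSet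
    fun j hj => extSigma_coord (fun h => h0 (h ▸ hj))

section prob
variable (Q : Measure Omega) [IsProbabilityMeasure Q]

lemma indicator_integrable :
    Integrable (Set.indicator {ω : Omega | ω 0 = true} (fun _ => (1 : ℝ))) Q :=
  (integrable_const (1 : ℝ)).indicator (measSet_coord 0)

lemma condBadProb_le_ae : condBadProb Q ≤ᵐ[Q] fun _ => badParam Q := by
  have hle1 : condBadProb Q ≤ᵐ[Q] fun _ => (1 : ℝ) := by
    have h := condExp_mono (μ := Q) (m := extSigma) (indicator_integrable Q)
      (integrable_const (1 : ℝ))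
      (Filter.Eventually.of_forall fun ω => Set.indicator_le_self' (by simp) ω |>.trans
        (by by_cases h : ω ∈ {ω : Omega | ω 0 = true} <;> simp [Set.indicator, h]))
    rwa [condExp_const extSigma_le (1 : ℝ)] at h
  have hbdd : Filter.IsBoundedUnder (· ≤ ·) (ae Q) (condBadProb Q) :=
    ⟨1, Filter.eventually_map.mpr hle1⟩
  exact ae_le_essSup hbdd

lemma peel_zero {B : Set Omega} (hB : MeasurableSet[extSigma] B) :
    (Q (B ∩ {ω : Omega | ω 0 = true})).toReal ≤ badParam Q * (Q B).toReal := by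
  haveI : SigmaFinite (Q.trim extSigma_le) := inferInstance
  set f := Set.indicator {ω : Omega | ω 0 = true} (fun _ => (1 : ℝ)) with hf_def
  have hf : Integrable f Q := indicator_integrable Q
  have hBm : MeasurableSet B := extSigma_le _ hB
  have h1 : ∫ ω in B, f ω ∂Q = (Q (B ∩ {ω : Omega | ω 0 = true})).toReal := by
    rw [hf_def, setIntegral_indicator (measSet_coord 0), setIntegral_const, smul_eq_mul,
      mul_one, measureReal_def]
  have h2 : ∫ ω in B, condBadProb Q ω ∂Q = ∫ ω in B, f ω ∂Q :=
    setIntegral_condExp extSigma_le hf hB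
  have h3 : ∫ ω in B, condBadProb Q ω ∂Q ≤ ∫ ω in B, (fun _ => badParam Q) ω ∂Q := by
    refine integral_mono_ae (integrable_condExp.integrableOn) (integrable_const _).integrableOn
      (ae_restrict_of_ae (condBadProb_le_ae Q))
  have h4 : ∫ ω in B, (fun _ => badParam Q) ω ∂Q = (Q B).toReal * badParam Q := by
    rw [setIntegral_const, smul_eq_mul, measureReal_def]
  linarith [h1 ▸ h2 ▸ h3, h4 ▸ h3]

lemma badParam_nonneg : 0 ≤ badParam Q := by
  have h := peel_zero Q (B := Set.univ) MeasurableSet.univ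
  simp only [Set.univ_inter, measure_univ, ENNReal.toReal_one, mul_one] at h
  exact le_trans ENNReal.toReal_nonneg h

variable (hinv : TransInvariant Q)

/-- The translation map. -/
def shiftT (v : Site) : Omega → Omega := fun ω x => ω (x + v)

lemma shiftT_measurable (v : Site) : Measurable (shiftT v) :=
  measurable_pi_lambda _ fun x => measurable_pi_apply (x + v)

include hinv in
lemma peel {S : Finset Site} {i : Site} (hi : i ∉ S) :
    (Q (Ev (insert i S))).toReal ≤ badParam Q * (Q (Ev S)).toReal := by
  set B : Set Omega := Ev (S.image (fun j => j - i)) with hB_def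
  have h0B : (0 : Site) ∉ S.image (fun j => j - i) := by
    intro hmem
    obtain ⟨j, hj, hji⟩ := Finset.mem_image.mp hmem
    exact hi (by rwa [sub_eq_zero.mp hji] at hj)
  have hBext : MeasurableSet[extSigma] B := Ev_extSigma h0B
  have hBm : MeasurableSet B := extSigma_le _ hBext
  have hpre1 : shiftT i ⁻¹' B = Ev S := by
    ext ω
    simp only [hB_def, Ev, shiftT, Set.mem_preimage, Set.mem_setOf_eq, Finset.mem_image]
    constructor
    · intro h j hj
      have := h (j - i) ⟨j, hj, rfl⟩
      rwa [sub_add_cancel] at this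
    · rintro h m ⟨j, hj, rfl⟩
      rw [sub_add_cancel]; exact h j hj
  have hpre2 : shiftT i ⁻¹' (B ∩ {ω : Omega | ω 0 = true}) = Ev (insert i S) := by
    rw [Set.preimage_inter, hpre1, Ev_insert]
    congr 1
    ext ω
    simp [shiftT]
  have hmap : ∀ s : Set Omega, MeasurableSet s → Q (shiftT i ⁻¹' s) = Q s := by
    intro s hs
    have h2 : (Measure.map (fun (ω : Omega) (x : Site) => ω (x + i)) Q) s =
        Q (shiftT i ⁻¹' s) := Measure.map_apply (shiftT_measurable i) hs
    conv_rhs => rw [← hinv i]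
    exact h2.symm
  have e1 : Q (Ev (insert i S)) = Q (B ∩ {ω : Omega | ω 0 = true}) := by
    rw [← hpre2, hmap _ (hBm.inter (measSet_coord 0))]
  have e2 : Q (Ev S) = Q B := by rw [← hpre1, hmap _ hBm]
  rw [e1, e2]
  exact peel_zero Q hBext

include hinv in
lemma ev_prob_le (S : Finset Site) : (Q (Ev S)).toReal ≤ badParam Q ^ S.card := by
  induction S using Finset.induction_on with
  | empty => simp [Ev_empty]
  | @insert i S hi ih =>
      rw [Finset.card_insert_of_notMem hi, pow_succ]
      calc (Q (Ev (insert i S))).toReal ≤ badParam Q * (Q (Ev S)).toReal := peel Q hinv hi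
        _ ≤ badParam Q * badParam Q ^ S.card :=
            mul_le_mul_of_nonneg_left ih (badParam_nonneg Q)
        _ = badParam Q ^ S.card * badParam Q := by ring

include hinv in
lemma ev_prob_le' (S : Finset Site) :
    Q (Ev S) ≤ ENNReal.ofReal (badParam Q ^ S.card) := by
  rw [← ENNReal.ofReal_toReal (measure_ne_top Q (Ev S))]
  exact ENNReal.ofReal_le_ofReal (ev_prob_le Q hinv S)

end prob
open scoped ENNReal

/-! ### The bad events and Borel–Cantelli -/

/-- The event that `i` is `k`-bad. -/
def Ebad (Γ γ : ℕ → ℝ) (k : ℕ) (i : Site) : Set Omega := {ω | i ∈ BB Γ γ ω k}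

/-- The event that some site within Chebyshev distance `θ_{k+1} + Γ_{k+1}` of `i`
is `k`-bad. -/
def Fev (Γ γ : ℕ → ℝ) (k : ℕ) (i : Site) : Set Omega :=
  {ω | ∃ j ∈ boxF (thetaSeq Γ γ (k + 1) + Γ (k + 1)) i, j ∈ BB Γ γ ω k}

section prob2
variable {Γ γ : ℕ → ℝ}
variable (hΓpos : ∀ k, 1 ≤ k → 0 < Γ k) (hγpos : ∀ k, 1 ≤ k → 0 < γ k)
variable (hsteep : ∀ k, 1 ≤ k → 5 ≤ Γ (k + 1) / thetaSeq Γ γ k)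
variable (Q : Measure Omega) [IsProbabilityMeasure Q] (hinv : TransInvariant Q)

include hΓpos hγpos hsteep hinv in
lemma Ebad_le (k : ℕ) (i : Site) :
    Q (Ebad Γ γ k i) ≤ ENNReal.ofReal (NNk Γ γ k * badParam Q ^ (2 ^ k)) := by
  have hsub : Ebad Γ γ k i ⊆ ⋃ S ∈ treeF Γ γ k i, Ev S := by
    intro ω hω
    obtain ⟨S, hS, htrue⟩ := tree_witness hΓpos hγpos hω
    exact Set.mem_biUnion hS htrue
  calc Q (Ebad Γ γ k i) ≤ Q (⋃ S ∈ treeF Γ γ k i, Ev S) := measure_mono hsub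
    _ ≤ ∑ S ∈ treeF Γ γ k i, Q (Ev S) := measure_biUnion_finset_le _ _
    _ ≤ ∑ _S ∈ treeF Γ γ k i, ENNReal.ofReal (badParam Q ^ (2 ^ k)) := by
        refine Finset.sum_le_sum fun S hS => ?_
        have := ev_prob_le' Q hinv S
        rwa [tree_card hΓpos hγpos hsteep hS] at this
    _ = ((treeF Γ γ k i).card : ENNReal) * ENNReal.ofReal (badParam Q ^ (2 ^ k)) := by
        rw [Finset.sum_const, nsmul_eq_mul]
    _ ≤ ENNReal.ofReal (NNk Γ γ k * badParam Q ^ (2 ^ k)) := by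
        rw [← ENNReal.ofReal_natCast, ← ENNReal.ofReal_mul (by positivity)]
        refine ENNReal.ofReal_le_ofReal ?_
        exact mul_le_mul_of_nonneg_right (tree_count hΓpos hγpos k i)
          (pow_nonneg (badParam_nonneg Q) _)

include hΓpos hγpos in
lemma NNp_le (ha0 : Summable fun k : ℕ =>
      (2 : ℝ) ^ (-(k : ℤ)) * Real.log ((2 * (Γ (k + 1) + γ (k + 1)) + 1) ^ 2))
    (k : ℕ) :
    NNk Γ γ k * badParam Q ^ (2 ^ k) ≤ (badParam Q * Real.exp (aZero Γ γ / 2)) ^ (2 ^ k) := by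
  have hNN := NNk_le_exp hΓpos hγpos ha0 k
  have hexp : Real.exp ((2 ^ k : ℝ) * (aZero Γ γ / 2)) = Real.exp (aZero Γ γ / 2) ^ (2 ^ k) := by
    rw [← Real.exp_nat_mul]
    congr 1
    push_cast; ring
  have hp0 : 0 ≤ badParam Q := badParam_nonneg Q
  calc NNk Γ γ k * badParam Q ^ (2 ^ k)
      ≤ Real.exp (aZero Γ γ / 2) ^ (2 ^ k) * badParam Q ^ (2 ^ k) := by
        refine mul_le_mul_of_nonneg_right ?_ (pow_nonneg hp0 _)
        rw [← hexp]; exact hNN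
    _ = (badParam Q * Real.exp (aZero Γ γ / 2)) ^ (2 ^ k) := by
        rw [mul_pow]; ring

include hΓpos hγpos hsteep hinv in
lemma Ebad_le' (ha0 : Summable fun k : ℕ =>
      (2 : ℝ) ^ (-(k : ℤ)) * Real.log ((2 * (Γ (k + 1) + γ (k + 1)) + 1) ^ 2))
    (k : ℕ) (i : Site) :
    Q (Ebad Γ γ k i) ≤
      ENNReal.ofReal ((badParam Q * Real.exp (aZero Γ γ / 2)) ^ (2 ^ k)) :=
  le_trans (Ebad_le hΓpos hγpos hsteep Q hinv k i)
    (ENNReal.ofReal_le_ofReal (NNp_le hΓpos hγpos Q ha0 k))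

include hΓpos hγpos hsteep hinv in
lemma Fev_le (ha0 : Summable fun k : ℕ =>
      (2 : ℝ) ^ (-(k : ℤ)) * Real.log ((2 * (Γ (k + 1) + γ (k + 1)) + 1) ^ 2))
    (k : ℕ) (i : Site) :
    Q (Fev Γ γ k i) ≤ ENNReal.ofReal
      ((2 * (thetaSeq Γ γ (k + 1) + Γ (k + 1)) + 1) ^ 2 *
        (badParam Q * Real.exp (aZero Γ γ / 2)) ^ (2 ^ k)) := by
  set R : ℝ := thetaSeq Γ γ (k + 1) + Γ (k + 1) with hR
  have hR0 : 0 ≤ R :=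
    add_nonneg (thetaSeq_nonneg hΓpos hγpos _) (hΓpos _ (by omega)).le
  have hsub : Fev Γ γ k i ⊆ ⋃ j ∈ boxF R i, Ebad Γ γ k j := by
    rintro ω ⟨j, hj, hjB⟩
    exact Set.mem_biUnion hj hjB
  have hr0 : 0 ≤ (badParam Q * Real.exp (aZero Γ γ / 2)) ^ (2 ^ k) :=
    pow_nonneg (mul_nonneg (badParam_nonneg Q) (Real.exp_pos _).le) _
  calc Q (Fev Γ γ k i) ≤ Q (⋃ j ∈ boxF R i, Ebad Γ γ k j) := measure_mono hsub
    _ ≤ ∑ j ∈ boxF R i, Q (Ebad Γ γ k j) := measure_biUnion_finset_le _ _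
    _ ≤ ∑ _j ∈ boxF R i, ENNReal.ofReal ((badParam Q * Real.exp (aZero Γ γ / 2)) ^ (2 ^ k)) :=
        Finset.sum_le_sum fun j _ => Ebad_le' hΓpos hγpos hsteep Q hinv ha0 k j
    _ = ((boxF R i).card : ENNReal) *
        ENNReal.ofReal ((badParam Q * Real.exp (aZero Γ γ / 2)) ^ (2 ^ k)) := by
        rw [Finset.sum_const, nsmul_eq_mul]
    _ ≤ ENNReal.ofReal ((2 * R + 1) ^ 2 *
        (badParam Q * Real.exp (aZero Γ γ / 2)) ^ (2 ^ k)) := by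
        rw [← ENNReal.ofReal_natCast, ← ENNReal.ofReal_mul (by positivity)]
        exact ENNReal.ofReal_le_ofReal
          (mul_le_mul_of_nonneg_right (card_boxF_le hR0 i) hr0)

end prob2
section bc
variable {Γ γ : ℕ → ℝ}
variable (hΓpos : ∀ k, 1 ≤ k → 0 < Γ k) (hγpos : ∀ k, 1 ≤ k → 0 < γ k)
variable (hsteep : ∀ k, 1 ≤ k → 5 ≤ Γ (k + 1) / thetaSeq Γ γ k)
variable (Q : Measure Omega) [IsProbabilityMeasure Q]

include Q in
lemma r_lt_one (hp : badParam Q < Real.exp (-(aZero Γ γ) / 2)) :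
    badParam Q * Real.exp (aZero Γ γ / 2) < 1 := by
  have h := mul_lt_mul_of_pos_right hp (Real.exp_pos (aZero Γ γ / 2))
  rwa [← Real.exp_add, neg_div, neg_add_cancel, Real.exp_zero] at h

include Q in
lemma exists_decay (hp : badParam Q < Real.exp (-(aZero Γ γ) / 2)) :
    ∃ a : ℝ, 0 < a ∧ ∀ k : ℕ,
      (badParam Q * Real.exp (aZero Γ γ / 2)) ^ (2 ^ k) ≤ Real.exp (-a * 2 ^ k) := by
  set r : ℝ := badParam Q * Real.exp (aZero Γ γ / 2) with hr_def
  have hr0 : 0 ≤ r := mul_nonneg (badParam_nonneg Q) (Real.exp_pos _).le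
  have hr1 : r < 1 := r_lt_one Q hp
  rcases eq_or_lt_of_le hr0 with hr | hr
  · refine ⟨1, one_pos, fun k => ?_⟩
    rw [← hr, zero_pow (by positivity)]
    exact (Real.exp_pos _).le
  · refine ⟨-Real.log r, by simpa using Real.log_neg hr hr1, fun k => ?_⟩
    have : r ^ (2 ^ k) = Real.exp (((2 ^ k : ℕ) : ℝ) * Real.log r) := by
      rw [Real.exp_nat_mul, Real.exp_log hr]
    rw [this]
    apply le_of_eq
    congr 1
    push_cast
    ring

include hΓpos hγpos hsteep in
lemma good_event
    (ha0 : Summable fun k : ℕ =>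
      (2 : ℝ) ^ (-(k : ℤ)) * Real.log ((2 * (Γ (k + 1) + γ (k + 1)) + 1) ^ 2))
    (hicf : ∀ a : ℝ, 0 < a → Summable fun k : ℕ =>
      (2 * (thetaSeq Γ γ (k + 1) + Γ (k + 1)) + 1) ^ 2 * Real.exp (-a * 2 ^ k))
    (hinv : TransInvariant Q) (hp : badParam Q < Real.exp (-(aZero Γ γ) / 2)) :
    ∃ Obar : Set Omega, MeasurableSet Obar ∧ Q Obar = 1 ∧
      ∀ ω ∈ Obar, ∀ i : Site, ∃ K : ℕ, ∀ k, K ≤ k → ω ∉ Fev Γ γ k i := by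
  obtain ⟨a, ha, hdecay⟩ := exists_decay Q hp
  set b : ℕ → ℝ :=
    fun k => (2 * (thetaSeq Γ γ (k + 1) + Γ (k + 1)) + 1) ^ 2 * Real.exp (-a * 2 ^ k)
    with hb_def
  have hb : Summable b := hicf a ha
  have hb0 : ∀ k, 0 ≤ b k := fun k => by positivity
  have hFle : ∀ i k, Q (Fev Γ γ k i) ≤ ENNReal.ofReal (b k) := by
    intro i k
    refine (Fev_le hΓpos hγpos hsteep Q hinv ha0 k i).trans (ENNReal.ofReal_le_ofReal ?_)
    exact mul_le_mul_of_nonneg_left (hdecay k) (by positivity)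
  have hsum : ∀ i : Site, ∑' k, Q (Fev Γ γ k i) ≠ ⊤ := by
    intro i
    have h1 : ∑' k, Q (Fev Γ γ k i) ≤ ∑' k, ENNReal.ofReal (b k) :=
      ENNReal.tsum_le_tsum (hFle i)
    rw [← ENNReal.ofReal_tsum_of_nonneg hb0 hb] at h1
    exact ne_top_of_le_ne_top ENNReal.ofReal_ne_top h1
  have hlim : ∀ i : Site, Q (Filter.limsup (fun k => Fev Γ γ k i) Filter.atTop) = 0 :=
    fun i => measure_limsup_atTop_eq_zero (hsum i)
  have hN : Q (⋃ i : Site, Filter.limsup (fun k => Fev Γ γ k i) Filter.atTop) = 0 :=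
    measure_iUnion_null hlim
  obtain ⟨N', hsub, hm, h0⟩ := exists_measurable_superset_of_null hN
  refine ⟨N'ᶜ, hm.compl, (prob_compl_eq_one_iff hm).mpr h0, ?_⟩
  intro ω hω i
  have hnot : ω ∉ Filter.limsup (fun k => Fev Γ γ k i) Filter.atTop :=
    fun hc => hω (hsub (Set.mem_iUnion.mpr ⟨i, hc⟩))
  rw [Filter.limsup_eq_iInf_iSup_of_nat] at hnot
  simp only [Set.iInf_eq_iInter, Set.iSup_eq_iUnion, Set.mem_iInter, Set.mem_iUnion,
    not_forall, not_exists] at hnot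
  obtain ⟨n, hn⟩ := hnot
  exact ⟨n, fun k hk => hn k hk⟩

end bc
/-! ### Deterministic assembly -/

section assembly
variable {Γ γ : ℕ → ℝ}
variable (hΓpos : ∀ k, 1 ≤ k → 0 < Γ k) (hγpos : ∀ k, 1 ≤ k → 0 < γ k)
variable (hΓγ : ∀ k, 1 ≤ k → Γ k < γ k / 2)
variable {ω : Omega}

/-- Atoms of different positive grades are disjoint. -/
lemma disj_of_lt {k k' : ℕ} (h : k < k') {g g' : Set Site}
    (hg : kAtom Γ γ (k+1) (BB Γ γ ω k) g) (hg' : kAtom Γ γ (k'+1) (BB Γ γ ω k') g') :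
    Disjoint g g' := by
  rw [Set.disjoint_left]
  intro x hxg hxg'
  have h1 : x ∈ gentleStep Γ γ (k+1) (BB Γ γ ω k) := ⟨g, hg, hxg⟩
  have h2 : x ∈ BB Γ γ ω k' := hg'.subset hxg'
  have h3 : x ∈ BB Γ γ ω (k+1) := BB_antitone (by omega) h2
  exact h3.2 h1

include hΓpos in
lemma mem_Fev_of_Yzero {k : ℕ} {g : Set Site} {i : Site}
    (hg : kAtom Γ γ (k+1) (BB Γ γ ω k) g) (hY : i ∈ Yzero Γ γ (k+1) g) :
    ω ∈ Fev Γ γ k i := by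
  obtain ⟨i', hi'env, hcheb⟩ := hY
  obtain ⟨⟨a1, ha1, ha11⟩, ⟨b1, hb1, hb11⟩, ⟨c2, hc2, hc22⟩, ⟨d2, hd2, hd22⟩⟩ := hi'env
  have hdiam := hg.2.1
  -- first coordinate bound for a1
  have hd1 : ((i'.1 - a1.1).natAbs : ℝ) ≤ Γ (k+1) := by
    have hn : (i'.1 - a1.1).natAbs ≤ (b1.1 - a1.1).natAbs := by omega
    have hn2 : (b1.1 - a1.1).natAbs ≤ dist1 b1 a1 := Nat.le_add_right _ _
    have := hdiam b1 hb1 a1 ha1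
    have hc : ((i'.1 - a1.1).natAbs : ℝ) ≤ (dist1 b1 a1 : ℝ) := by
      exact_mod_cast Nat.cast_le.mpr (le_trans hn hn2)
    linarith
  -- second coordinate bound for a1
  have hd2' : ((i'.2 - a1.2).natAbs : ℝ) ≤ Γ (k+1) := by
    rcases le_total a1.2 i'.2 with hcase | hcase
    · have hn : (i'.2 - a1.2).natAbs ≤ (d2.2 - a1.2).natAbs := by omega
      have hn2 : (d2.2 - a1.2).natAbs ≤ dist1 d2 a1 := Nat.le_add_left _ _
      have := hdiam d2 hd2 a1 ha1
      have hc : ((i'.2 - a1.2).natAbs : ℝ) ≤ (dist1 d2 a1 : ℝ) := by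
        exact_mod_cast Nat.cast_le.mpr (le_trans hn hn2)
      linarith
    · have hn : (i'.2 - a1.2).natAbs ≤ (a1.2 - c2.2).natAbs := by omega
      have hn2 : (a1.2 - c2.2).natAbs ≤ dist1 a1 c2 := Nat.le_add_left _ _
      have := hdiam a1 ha1 c2 hc2
      have hc : ((i'.2 - a1.2).natAbs : ℝ) ≤ (dist1 a1 c2 : ℝ) := by
        exact_mod_cast Nat.cast_le.mpr (le_trans hn hn2)
      linarith
  -- the Chebyshev bounds from Yzero
  have hch1 : ((i'.1 - i.1).natAbs : ℝ) ≤ thetaSeq Γ γ (k+1) :=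
    (le_max_left _ _).trans hcheb
  have hch2 : ((i'.2 - i.2).natAbs : ℝ) ≤ thetaSeq Γ γ (k+1) :=
    (le_max_right _ _).trans hcheb
  -- combine to a box membership for a1 around i
  have hbox : a1 ∈ boxF (thetaSeq Γ γ (k+1) + Γ (k+1)) i := by
    refine mem_boxF_of_cheb ?_ ?_
    · have htri : (i.1 - a1.1).natAbs ≤ (i'.1 - i.1).natAbs + (i'.1 - a1.1).natAbs := by omega
      have : ((i.1 - a1.1).natAbs : ℝ) ≤
          ((i'.1 - i.1).natAbs : ℝ) + ((i'.1 - a1.1).natAbs : ℝ) := by exact_mod_cast htri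
      linarith
    · have htri : (i.2 - a1.2).natAbs ≤ (i'.2 - i.2).natAbs + (i'.2 - a1.2).natAbs := by omega
      have : ((i.2 - a1.2).natAbs : ℝ) ≤
          ((i'.2 - i.2).natAbs : ℝ) + ((i'.2 - a1.2).natAbs : ℝ) := by exact_mod_cast htri
      linarith
  exact ⟨a1, hbox, hg.subset ha1⟩

include hΓpos hγpos hΓγ in
lemma assembly
    (hF : ∀ i : Site, ∃ K : ℕ, ∀ k, K ≤ k → ω ∉ Fev Γ γ k i) :
    IsGentleDisintegration Γ γ {i : Site | ω i = false} (Catoms Γ γ ω) := by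
  have hΓpos' : ∀ k : ℕ, 0 < Γ (k + 1) := fun k => hΓpos (k+1) (by omega)
  refine ⟨?_, ?_, ?_, ?_, ?_, ?_, ?_, ?_, ?_⟩
  · -- finiteness
    rintro (_ | k) g hg
    · obtain ⟨i, -, rfl⟩ := hg; exact Set.finite_singleton i
    · exact kAtom.finite hg
  · -- nonempty
    rintro (_ | k) g hg
    · obtain ⟨i, -, rfl⟩ := hg; exact Set.singleton_nonempty i
    · exact kAtom.nonempty (hΓpos' k).le hg
  · -- unique grade
    rintro (_ | k) (_ | k') g hg hg'
    · rfl
    · obtain ⟨i, hi, rfl⟩ := hg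
      have : i ∈ BB Γ γ ω 0 := BB_antitone (Nat.zero_le k') (hg'.subset rfl)
      simp only [BB, Set.mem_setOf_eq] at this
      rw [this] at hi; exact absurd hi (by simp)
    · obtain ⟨i, hi, rfl⟩ := hg'
      have : i ∈ BB Γ γ ω 0 := BB_antitone (Nat.zero_le k) (hg.subset rfl)
      simp only [BB, Set.mem_setOf_eq] at this
      rw [this] at hi; exact absurd hi (by simp)
    · rcases lt_trichotomy k k' with h | h | h
      · exfalso
        obtain ⟨x, hx⟩ := kAtom.nonempty (hΓpos' k).le hg
        exact absurd ⟨g, hg, hx⟩ ((BB_antitone (by omega : k + 1 ≤ k') (hg'.subset hx)).2)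
      · rw [h]
      · exfalso
        obtain ⟨x, hx⟩ := kAtom.nonempty (hΓpos' k').le hg'
        exact absurd ⟨g, hg', hx⟩ ((BB_antitone (by omega : k' + 1 ≤ k) (hg.subset hx)).2)
  · -- disjointness
    rintro (_ | k) (_ | k') g g' hg hg' hne
    · obtain ⟨i, -, rfl⟩ := hg; obtain ⟨i', -, rfl⟩ := hg'
      simp only [Set.disjoint_singleton_left, Set.mem_singleton_iff]
      exact fun h => hne (by rw [h])
    · obtain ⟨i, hi, rfl⟩ := hg
      rw [Set.disjoint_left]
      rintro x rfl hx'
      have : x ∈ BB Γ γ ω 0 := BB_antitone (Nat.zero_le k') (hg'.subset hx')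
      simp only [BB, Set.mem_setOf_eq] at this
      rw [this] at hi; exact absurd hi (by simp)
    · obtain ⟨i, hi, rfl⟩ := hg'
      rw [Set.disjoint_right]
      rintro x rfl hx
      have : x ∈ BB Γ γ ω 0 := BB_antitone (Nat.zero_le k) (hg.subset hx)
      simp only [BB, Set.mem_setOf_eq] at this
      rw [this] at hi; exact absurd hi (by simp)
    · rcases lt_trichotomy k k' with h | h | h
      · exact disj_of_lt h hg hg'
      · subst h
        refine kAtom.disjoint ?_ hg hg' hne
        have h1 := hΓγ (k+1) (by omega)
        have h2 := hγpos (k+1) (by omega)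
        linarith
      · exact (disj_of_lt h hg' hg).symm
  · -- covering
    rw [Set.eq_univ_iff_forall]
    intro i
    rw [Set.mem_iUnion]
    by_cases hωi : ω i = false
    · exact ⟨0, by rw [GGofC_Catoms_zero]; exact hωi⟩
    · by_contra hnc
      push_neg at hnc
      have hi0 : i ∈ BB Γ γ ω 0 := by
        simp only [BB, Set.mem_setOf_eq]
        simp only [Bool.not_eq_false] at hωi
        exact hωi
      have hall : ∀ k, i ∈ BB Γ γ ω k :=
        mem_BB_of_not_gentle hi0 (fun k => hnc (k+1))
      obtain ⟨K, hK⟩ := hF i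
      refine hK K le_rfl ⟨i, ?_, hall K⟩
      refine mem_boxF_of_cheb ?_ ?_ <;>
        · simp only [sub_self, Int.natAbs_zero, Nat.cast_zero]
          exact add_nonneg (thetaSeq_nonneg hΓpos hγpos _) (hΓpos' K).le
  · -- C 0
    ext s
    simp only [Catoms, Set.mem_setOf_eq]
  · -- diameter
    intro k g hg x hx y hy
    exact hg.2.1 x hx y hy
  · -- separation
    intro k g hg x hx y hy
    rw [BBofC_Catoms] at hy
    exact hg.2.2 x hx y hy
  · -- boundedness of grades
    intro i
    obtain ⟨K, hK⟩ := hF i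
    refine ⟨K, fun k g hg hY => ?_⟩
    by_contra hcon
    push_neg at hcon
    exact hK k (by omega) (mem_Fev_of_Yzero hΓpos hg hY)

end assembly

/-- Borel–Cantelli consequence: almost-sure gentle disintegration.  Under
the steepness/summability conditions on `Γ, γ`, if `Q` is a translation-invariant
probability measure on `Ω` with badness parameter `p < e^{-a₀/2}`, then there is a
measurable `Ω̄ ⊆ Ω` with `Q(Ω̄) = 1` such that for every `ω ∈ Ω̄` the collection of the
singletons of `0`-gentle sites together with the `k`-gentle atoms, `k ≥ 1`, is a gentle
disintegration of `L^(l)` with respect to `{i : ω_i = 0}`, `Γ`, `γ`. -/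
theorem as_gentle_disintegration (Γ γ : ℕ → ℝ)
    (hΓpos : ∀ k, 1 ≤ k → 0 < Γ k) (hγpos : ∀ k, 1 ≤ k → 0 < γ k)
    (hΓmono : ∀ k, 1 ≤ k → Γ k < Γ (k + 1)) (hγmono : ∀ k, 1 ≤ k → γ k < γ (k + 1))
    (hΓ1 : 2 ≤ Γ 1) (hΓγ : ∀ k, 1 ≤ k → Γ k < γ k / 2)
    (hsteep : ∀ k, 1 ≤ k → 5 ≤ Γ (k + 1) / thetaSeq Γ γ k)
    (ha0 : Summable fun k : ℕ =>
      (2 : ℝ) ^ (-(k : ℤ)) * Real.log ((2 * (Γ (k + 1) + γ (k + 1)) + 1) ^ 2))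
    (hicf : ∀ a : ℝ, 0 < a → Summable fun k : ℕ =>
      (2 * (thetaSeq Γ γ (k + 1) + Γ (k + 1)) + 1) ^ 2 * Real.exp (-a * 2 ^ k))
    (Q : Measure Omega) [IsProbabilityMeasure Q] (hinv : TransInvariant Q)
    (hp : badParam Q < Real.exp (-(aZero Γ γ) / 2)) :
    ∃ Obar : Set Omega, MeasurableSet Obar ∧ Q Obar = 1 ∧
      ∀ ω ∈ Obar, IsGentleDisintegration Γ γ {i : Site | ω i = false} (Catoms Γ γ ω) := by
  obtain ⟨Obar, hmeas, hprob, hgood⟩ :=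
    good_event hΓpos hγpos hsteep Q ha0 hicf hinv hp
  exact ⟨Obar, hmeas, hprob, fun ω hω => assembly hΓpos hγpos hΓγ (hgood ω hω)⟩
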